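/- Let F : ℍ → ℝ be bounded and harmonic on ℍ (that is, twice continuously differentiable with vanishing Euclidean Laplacian on ℍ, viewing ℍ ⊆ ℂ ≅ ℝ²). Suppose that for every x ∈ ℝ with x ≠ 0, F(z) → 0 as z → x with z ∈ ℍ. Then F is identically 0 on ℍ. -/

import Mathlib

open Filter Set Topology

/-- The Euclidean Laplacian `Δf = ∂²f/∂x² + ∂²f/∂y²` of a function `f : ℂ → ℝ` of the
real coordinates `(Re z, Im z)`. -/
noncomputable def planeLaplacian (f : ℂ → ℝ) (z : ℂ) : ℝ :=
  deriv (deriv (fun x : ℝ => f ((x : ℂ) + z.im * Complex.I))) z.re +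
    deriv (deriv (fun y : ℝ => f ((z.re : ℂ) + y * Complex.I))) z.im

lemma contDiff_hco (b : ℝ) : ContDiff ℝ 2 (fun x : ℝ => (x : ℂ) + b * Complex.I) :=
  (Complex.ofRealCLM.contDiff.of_le le_top).add contDiff_const

lemma contDiff_vco (a : ℝ) : ContDiff ℝ 2 (fun y : ℝ => (a : ℂ) + y * Complex.I) :=
  contDiff_const.add ((Complex.ofRealCLM.contDiff.of_le le_top).mul contDiff_const)

lemma cdAt_deriv {f : ℝ → ℝ} {V : Set ℝ} (hf : ContDiffOn ℝ 2 f V) (hV : IsOpen V)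
    {a : ℝ} (ha : a ∈ V) : DifferentiableAt ℝ (deriv f) a := by
  have hd1 : ContDiffOn ℝ 1 (deriv f) V := hf.deriv_of_isOpen hV (by norm_num)
  exact ((hd1.differentiableOn one_ne_zero) a ha).differentiableAt (hV.mem_nhds ha)

lemma cdAt_self {f : ℝ → ℝ} {V : Set ℝ} (hf : ContDiffOn ℝ 2 f V) (hV : IsOpen V)
    {a : ℝ} (ha : a ∈ V) : DifferentiableAt ℝ f a :=
  ((hf.differentiableOn (by norm_num)) a ha).differentiableAt (hV.mem_nhds ha)

/-- Additivity of the second derivative for C² functions on an open set. -/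
lemma secondDeriv_add {f g : ℝ → ℝ} {V : Set ℝ} (hV : IsOpen V)
    (hf : ContDiffOn ℝ 2 f V) (hg : ContDiffOn ℝ 2 g V) {a : ℝ} (ha : a ∈ V) :
    deriv (deriv (fun x => f x + g x)) a = deriv (deriv f) a + deriv (deriv g) a := by
  have hev : deriv (fun x => f x + g x) =ᶠ[𝓝 a] fun x => deriv f x + deriv g x := by
    filter_upwards [hV.mem_nhds ha] with x hx
    exact deriv_add (cdAt_self hf hV hx) (cdAt_self hg hV hx)
  rw [hev.deriv_eq, deriv_fun_add (cdAt_deriv hf hV ha) (cdAt_deriv hg hV ha)]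

lemma slice_h_contDiffOn {u : ℂ → ℝ} {U : Set ℂ} (hu : ContDiffOn ℝ 2 u U) (b : ℝ) :
    ContDiffOn ℝ 2 (fun x : ℝ => u ((x : ℂ) + b * Complex.I))
      ((fun x : ℝ => (x : ℂ) + b * Complex.I) ⁻¹' U) :=
  hu.comp (contDiff_hco b).contDiffOn (fun _ hx => hx)

lemma slice_v_contDiffOn {u : ℂ → ℝ} {U : Set ℂ} (hu : ContDiffOn ℝ 2 u U) (a : ℝ) :
    ContDiffOn ℝ 2 (fun y : ℝ => u ((a : ℂ) + y * Complex.I))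
      ((fun y : ℝ => (a : ℂ) + y * Complex.I) ⁻¹' U) :=
  hu.comp (contDiff_vco a).contDiffOn (fun _ hx => hx)

lemma mem_slice_h {U : Set ℂ} {z : ℂ} (hz : z ∈ U) :
    z.re ∈ (fun x : ℝ => (x : ℂ) + z.im * Complex.I) ⁻¹' U := by
  simp only [mem_preimage, Complex.re_add_im]; exact hz

lemma mem_slice_v {U : Set ℂ} {z : ℂ} (hz : z ∈ U) :
    z.im ∈ (fun y : ℝ => (z.re : ℂ) + y * Complex.I) ⁻¹' U := by
  simp only [mem_preimage, Complex.re_add_im]; exact hz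

lemma planeLaplacian_add {u v : ℂ → ℝ} {U : Set ℂ} (hU : IsOpen U)
    (hu : ContDiffOn ℝ 2 u U) (hv : ContDiffOn ℝ 2 v U) {z : ℂ} (hz : z ∈ U) :
    planeLaplacian (fun w => u w + v w) z = planeLaplacian u z + planeLaplacian v z := by
  unfold planeLaplacian
  rw [secondDeriv_add ((contDiff_hco z.im).continuous.isOpen_preimage U hU)
        (slice_h_contDiffOn hu z.im) (slice_h_contDiffOn hv z.im) (mem_slice_h hz),
      secondDeriv_add ((contDiff_vco z.re).continuous.isOpen_preimage U hU)
        (slice_v_contDiffOn hu z.re) (slice_v_contDiffOn hv z.re) (mem_slice_v hz)]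
  ring

/-- The function `δ (Re z)²` has Laplacian `2δ`. -/
lemma planeLaplacian_sq_re (δ : ℝ) (z : ℂ) :
    planeLaplacian (fun w => δ * w.re ^ 2) z = 2 * δ := by
  unfold planeLaplacian
  have h1 : (fun x : ℝ => δ * ((x : ℂ) + z.im * Complex.I).re ^ 2) = fun x : ℝ => δ * x ^ 2 := by
    funext x; simp
  have h2 : (fun y : ℝ => δ * ((z.re : ℂ) + y * Complex.I).re ^ 2)
      = fun _ : ℝ => δ * z.re ^ 2 := by
    funext y; simp
  rw [h1, h2]
  have hd : deriv (fun x : ℝ => δ * x ^ 2) = fun x => δ * (2 * x) := by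
    funext x
    rw [deriv_const_mul _ (differentiable_pow 2).differentiableAt, deriv_pow_field 2]
    ring
  rw [hd]
  have hc : deriv (deriv (fun _ : ℝ => δ * z.re ^ 2)) z.im = 0 := by
    simp [deriv_const']
  rw [hc]
  have : deriv (fun x : ℝ => δ * (2 * x)) = fun _ => δ * 2 := by
    funext x
    rw [deriv_const_mul _ (by fun_prop : DifferentiableAt ℝ (fun x : ℝ => 2 * x) x),
      deriv_const_mul _ differentiable_id.differentiableAt]
    simp
  rw [this]; ring

lemma secondDeriv_nonpos_of_isLocalMax {f : ℝ → ℝ} {a : ℝ} {V : Set ℝ}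
    (hV : IsOpen V) (haV : a ∈ V) (hf : ContDiffOn ℝ 2 f V)
    (hmax : IsLocalMax f a) : deriv (deriv f) a ≤ 0 := by
  by_contra hcon
  push_neg at hcon
  have hd1 : ContDiffOn ℝ 1 (deriv f) V := hf.deriv_of_isOpen hV (by norm_num)
  have hdiffOn : DifferentiableOn ℝ f V := hf.differentiableOn (by norm_num)
  have hderivdiff : DifferentiableAt ℝ (deriv f) a := by
    have := (hd1.differentiableOn one_ne_zero) a haV
    exact this.differentiableAt (hV.mem_nhds haV)
  have hL : HasDerivAt (deriv f) (deriv (deriv f) a) a := hderivdiff.hasDerivAt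
  have h0 : deriv f a = 0 := hmax.deriv_eq_zero
  have hslope := hasDerivAt_iff_tendsto_slope.1 hL
  have h1 : ∀ᶠ x in 𝓝[≠] a, 0 < slope (deriv f) a x :=
    hslope.eventually (eventually_gt_nhds hcon)
  have h2 : ∀ᶠ x in 𝓝[≠] a, f x ≤ f a := eventually_nhdsWithin_of_eventually_nhds hmax
  have h3 : ∀ᶠ x in 𝓝[≠] a, x ∈ V :=
    eventually_nhdsWithin_of_eventually_nhds (hV.eventually_mem haV)
  have h4 := (h1.and (h2.and h3))
  rw [eventually_nhdsWithin_iff] at h4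
  rw [Metric.eventually_nhds_iff] at h4
  obtain ⟨ε, hε, hball⟩ := h4
  set b := a + ε / 2 with hb
  have hab : a < b := by simp [hb]; positivity
  have hIccV : Icc a b ⊆ V := by
    intro x hx
    have hx2 : x ≤ a + ε / 2 := hb ▸ hx.2
    rcases eq_or_ne x a with rfl | hxa
    · exact haV
    · exact (hball (by rw [Real.dist_eq, abs_lt]; constructor <;> nlinarith [hx.1]) hxa).2.2
  have hcont : ContinuousOn f (Icc a b) := (hdiffOn.continuousOn).mono hIccV
  have hmono : StrictMonoOn f (Icc a b) := by
    apply strictMonoOn_of_deriv_pos (convex_Icc a b) hcont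
    intro x hx
    rw [interior_Icc] at hx
    have hxa : x ≠ a := ne_of_gt hx.1
    have hx2 : x ≤ a + ε / 2 := hb ▸ hx.2.le
    have hd : dist x a < ε := by rw [Real.dist_eq, abs_lt]; constructor <;> nlinarith [hx.1]
    have := (hball hd hxa).1
    have hxpos : 0 < x - a := by linarith [hx.1]
    rw [slope_def_field, h0] at this
    have : 0 < deriv f x / (x - a) := by simpa [div_eq_mul_inv] using this
    exact (div_pos_iff.1 this).resolve_right (fun h => absurd hxpos (by linarith [h.2])) |>.1
  have hfb : f a < f b := hmono (left_mem_Icc.2 hab.le) (right_mem_Icc.2 hab.le) hab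
  have : f b ≤ f a := by
    rcases eq_or_ne b a with h | h
    · simp [h]
    · exact (hball (by rw [Real.dist_eq, hb]; rw [abs_lt]; constructor <;> linarith) h).2.1
  linarith

lemma maximum_principle {Ω : Set ℂ} (hΩ : IsOpen Ω) (hbd : Bornology.IsBounded Ω)
    {g : ℂ → ℝ} (hg : ContDiffOn ℝ 2 g Ω)
    (hsub : ∀ z ∈ Ω, 0 ≤ planeLaplacian g z)
    (hbdry : ∀ ζ ∈ closure Ω \ Ω, ∀ ε > 0, ∀ᶠ z in 𝓝[Ω] ζ, g z < ε) :
    ∀ z ∈ Ω, g z ≤ 0 := by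
  by_contra hcon
  push_neg at hcon
  obtain ⟨z₁, hz₁, hgz₁⟩ := hcon
  set c := g z₁ with hc
  -- bound on Re² over Ω
  obtain ⟨R, hR⟩ := hbd.subset_closedBall 0
  set M := R ^ 2 + 1 with hM
  have hM0 : 0 < M := by positivity
  have hMb : ∀ z ∈ closure Ω, z.re ^ 2 ≤ M := by
    intro z hz
    have : z ∈ Metric.closedBall (0:ℂ) R := by
      have : closure Ω ⊆ Metric.closedBall 0 R :=
        closure_minimal hR Metric.isClosed_closedBall
      exact this hz
    have h1 : ‖z‖ ≤ R := by simpa [Complex.dist_eq] using this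
    have h2 : |z.re| ≤ ‖z‖ := Complex.abs_re_le_norm z
    have := sq_le_sq' (by linarith [abs_nonneg z.re, neg_abs_le z.re]) (le_trans h2 h1)
    nlinarith [abs_nonneg z.re, sq_abs z.re]
  set δ := c / (2 * M) with hδ
  have hδ0 : 0 < δ := by positivity
  have hδM : δ * M = c / 2 := by rw [hδ]; field_simp
  clear_value δ
  clear_value c
  clear_value M
  set u : ℂ → ℝ := fun z => g z + δ * z.re ^ 2 with hu
  have huC2 : ContDiffOn ℝ 2 u Ω := by
    apply hg.add
    exact (contDiff_const.mul ((Complex.reCLM.contDiff.of_le le_top).pow 2)).contDiffOn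
  have hq : ContDiffOn ℝ 2 (fun z : ℂ => δ * z.re ^ 2) Ω :=
    (contDiff_const.mul ((Complex.reCLM.contDiff.of_le le_top).pow 2)).contDiffOn
  have hulap : ∀ z ∈ Ω, planeLaplacian u z = planeLaplacian g z + 2 * δ := by
    intro z hz
    rw [hu, planeLaplacian_add hΩ hg hq hz, planeLaplacian_sq_re]
  -- u is bounded above on Ω
  have hK : IsCompact (closure Ω) := Metric.isCompact_of_isClosed_isBounded isClosed_closure hbd.closure
  have hbdd : BddAbove (u '' Ω) := by
    have hcover : ∀ ζ ∈ closure Ω, ∃ V ∈ 𝓝 ζ, ∃ B : ℝ, ∀ z ∈ V ∩ Ω, u z ≤ B := by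
      intro ζ hζ
      by_cases hmem : ζ ∈ Ω
      · have hcont : ContinuousAt u ζ :=
          (huC2.continuousOn ζ hmem).continuousAt (hΩ.mem_nhds hmem)
        have := hcont.eventually (eventually_lt_nhds (lt_add_one (u ζ)))
        obtain ⟨V, hV, hVP⟩ := this.exists_mem
        exact ⟨V, hV, u ζ + 1, fun z hz => (hVP z hz.1).le⟩
      · have := hbdry ζ ⟨hζ, hmem⟩ 1 one_pos
        rw [eventually_nhdsWithin_iff] at this
        obtain ⟨V, hV, hVP⟩ := this.exists_mem
        exact ⟨V, hV, 1 + δ * M, fun z hz =>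
          add_le_add (hVP z hz.1 hz.2).le
            (mul_le_mul_of_nonneg_left (hMb z (subset_closure hz.2)) hδ0.le)⟩
    choose! V hVn B hVB using hcover
    obtain ⟨t, htsub, htcover⟩ := hK.elim_nhds_subcover V (fun ζ hζ => hVn ζ hζ)
    obtain ⟨Bmax, hBmax⟩ := (t.image B).exists_le
    refine ⟨Bmax, ?_⟩
    rintro y ⟨z, hzΩ, rfl⟩
    obtain ⟨ζ, hζt, hζV⟩ := Set.mem_iUnion₂.1 (htcover (subset_closure hzΩ))
    exact le_trans (hVB ζ (htsub ζ hζt) z ⟨hζV, hzΩ⟩) (hBmax _ (Finset.mem_image_of_mem B hζt))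
  set s := sSup (u '' Ω) with hs
  clear_value s
  have hne : (u '' Ω).Nonempty := ⟨u z₁, z₁, hz₁, rfl⟩
  have hsz₁ : u z₁ ≤ s := hs ▸ le_csSup hbdd ⟨z₁, hz₁, rfl⟩
  have hsgt : δ * M < s := by
    have h1 : c ≤ u z₁ := by
      have : 0 ≤ δ * z₁.re ^ 2 := by positivity
      simp only [hu]; linarith
    linarith [hgz₁, hsz₁]
  -- maximizing sequence
  have hseq : ∀ n : ℕ, ∃ z ∈ Ω, s - 1 / (n + 1) < u z := by
    intro n
    have : s - 1 / (n + 1) < s := by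
      have : (0:ℝ) < 1 / (n + 1) := by positivity
      linarith
    obtain ⟨y, hy, hy2⟩ := exists_lt_of_lt_csSup hne (hs ▸ this)
    obtain ⟨z, hz, rfl⟩ := hy
    exact ⟨z, hz, hs ▸ hy2⟩
  choose w hwΩ hwu using hseq
  obtain ⟨ζ, hζK, φ, hφ, hφt⟩ := hK.tendsto_subseq (fun n => subset_closure (hwΩ n))
  have hut : Tendsto (fun n => u (w (φ n))) atTop (𝓝 s) := by
    apply tendsto_of_tendsto_of_tendsto_of_le_of_le (g := fun n => s - 1 / (φ n + 1))
      (h := fun _ => s)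
    · have h0 : Tendsto (fun n : ℕ => 1 / ((φ n : ℝ) + 1)) atTop (𝓝 0) :=
        tendsto_one_div_add_atTop_nhds_zero_nat.comp hφ.tendsto_atTop
      simpa using (tendsto_const_nhds (x := s) (f := atTop)).sub h0
    · exact tendsto_const_nhds
    · exact fun n => (hwu (φ n)).le
    · exact fun n => hs ▸ le_csSup hbdd ⟨w (φ n), hwΩ (φ n), rfl⟩
  by_cases hζΩ : ζ ∈ Ω
  · -- interior maximum: contradiction with subharmonicity
    have hcont : ContinuousAt u ζ := (huC2.continuousOn ζ hζΩ).continuousAt (hΩ.mem_nhds hζΩ)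
    have huζ : u ζ = s :=
      tendsto_nhds_unique (hcont.tendsto.comp hφt) hut
    have hmax : IsLocalMax u ζ := by
      filter_upwards [hΩ.mem_nhds hζΩ] with z hz
      rw [huζ]; exact hs ▸ le_csSup hbdd ⟨z, hz, rfl⟩
    -- slices
    have hx : deriv (deriv (fun x : ℝ => u ((x : ℂ) + ζ.im * Complex.I))) ζ.re ≤ 0 := by
      apply secondDeriv_nonpos_of_isLocalMax
        ((contDiff_hco ζ.im).continuous.isOpen_preimage Ω hΩ) (mem_slice_h hζΩ)
        (slice_h_contDiffOn huC2 ζ.im)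
      have : Tendsto (fun x : ℝ => (x : ℂ) + ζ.im * Complex.I) (𝓝 ζ.re) (𝓝 ζ) := by
        have := (contDiff_hco ζ.im).continuous.tendsto ζ.re
        simpa [Complex.re_add_im] using this
      simpa [IsLocalMax, IsMaxFilter, Complex.re_add_im] using this.eventually hmax
    have hy : deriv (deriv (fun y : ℝ => u ((ζ.re : ℂ) + y * Complex.I))) ζ.im ≤ 0 := by
      apply secondDeriv_nonpos_of_isLocalMax
        ((contDiff_vco ζ.re).continuous.isOpen_preimage Ω hΩ) (mem_slice_v hζΩ)
        (slice_v_contDiffOn huC2 ζ.re)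
      have : Tendsto (fun y : ℝ => (ζ.re : ℂ) + y * Complex.I) (𝓝 ζ.im) (𝓝 ζ) := by
        have := (contDiff_vco ζ.re).continuous.tendsto ζ.im
        simpa [Complex.re_add_im] using this
      simpa [IsLocalMax, IsMaxFilter, Complex.re_add_im] using this.eventually hmax
    have := hulap ζ hζΩ
    have h2 := hsub ζ hζΩ
    have : planeLaplacian u ζ ≤ 0 := by
      unfold planeLaplacian; linarith
    rw [hulap ζ hζΩ] at this
    linarith
  · -- boundary: contradiction with boundary bounds
    have hst : Tendsto (fun n => w (φ n)) atTop (𝓝[Ω] ζ) := by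
      rw [tendsto_nhdsWithin_iff]
      exact ⟨hφt, Eventually.of_forall fun n => hwΩ (φ n)⟩
    have hle : ∀ ε > (0:ℝ), s ≤ ε + δ * M := by
      intro ε hε
      have := (hst.eventually (hbdry ζ ⟨hζK, hζΩ⟩ ε hε))
      have hev : ∀ᶠ n in atTop, u (w (φ n)) ≤ ε + δ * M := by
        filter_upwards [this] with n hn
        have := mul_le_mul_of_nonneg_left (hMb _ (subset_closure (hwΩ (φ n)))) hδ0.le
        simp only [hu]; linarith
      exact le_of_tendsto hut hev
    have : s ≤ δ * M := by
      by_contra hs2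
      push_neg at hs2
      have := hle ((s - δ * M) / 2) (by linarith)
      linarith
    linarith

lemma hasDerivAt_hco (b x : ℝ) :
    HasDerivAt (fun x : ℝ => (x : ℂ) + b * Complex.I) 1 x := by
  simpa using (Complex.ofRealCLM.hasDerivAt (x := x)).add_const ((b:ℂ) * Complex.I)

lemma hasDerivAt_vco (a y : ℝ) :
    HasDerivAt (fun y : ℝ => (a : ℂ) + y * Complex.I) Complex.I y := by
  have h := ((Complex.ofRealCLM.hasDerivAt (x := y)).mul_const Complex.I).const_add (a : ℂ)
  simpa using h

lemma slice_h_hasDerivAt_im {f : ℂ → ℂ} {U : Set ℂ} (hU : IsOpen U)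
    (hf : DifferentiableOn ℂ f U) {b x : ℝ} (hx : (x : ℂ) + b * Complex.I ∈ U) :
    HasDerivAt (fun x : ℝ => (f ((x : ℂ) + b * Complex.I)).im)
      ((deriv f ((x : ℂ) + b * Complex.I)).im) x := by
  set w := (x : ℂ) + b * Complex.I
  have hd : HasDerivAt f (deriv f w) w :=
    (hf.differentiableAt (hU.mem_nhds hx)).hasDerivAt
  have hcomp : HasDerivAt (fun x : ℝ => f ((x : ℂ) + b * Complex.I)) (deriv f w) x := by
    simpa [Function.comp_def] using (hd.hasFDerivAt.restrictScalars ℝ).comp_hasDerivAt x (hasDerivAt_hco b x)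
  exact (Complex.imCLM.hasFDerivAt.comp_hasDerivAt x hcomp)

lemma slice_v_hasDerivAt_im {f : ℂ → ℂ} {U : Set ℂ} (hU : IsOpen U)
    (hf : DifferentiableOn ℂ f U) {a y : ℝ} (hy : (a : ℂ) + y * Complex.I ∈ U) :
    HasDerivAt (fun y : ℝ => (f ((a : ℂ) + y * Complex.I)).im)
      ((deriv f ((a : ℂ) + y * Complex.I) * Complex.I).im) y := by
  set w := (a : ℂ) + y * Complex.I
  have hd : HasDerivAt f (deriv f w) w :=
    (hf.differentiableAt (hU.mem_nhds hy)).hasDerivAt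
  have hcomp : HasDerivAt (fun y : ℝ => f ((a : ℂ) + y * Complex.I))
      (deriv f w * Complex.I) y := by
    simpa [smul_eq_mul, mul_comm, Function.comp_def] using (hd.hasFDerivAt.restrictScalars ℝ).comp_hasDerivAt y (hasDerivAt_vco a y)
  exact (Complex.imCLM.hasFDerivAt.comp_hasDerivAt y hcomp)

lemma contDiffOn_im_of_holo {f : ℂ → ℂ} {U : Set ℂ} (hU : IsOpen U)
    (hf : DifferentiableOn ℂ f U) : ContDiffOn ℝ 2 (fun w => (f w).im) U := by
  have h := (hf.contDiffOn (n := 2) hU).restrict_scalars ℝ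
  exact Complex.imCLM.contDiff.comp_contDiffOn h

lemma planeLaplacian_im_holo {f : ℂ → ℂ} {U : Set ℂ} (hU : IsOpen U)
    (hf : DifferentiableOn ℂ f U) {z : ℂ} (hz : z ∈ U) :
    planeLaplacian (fun w => (f w).im) z = 0 := by
  have hf' : DifferentiableOn ℂ (deriv f) U := (hf.analyticOnNhd hU).deriv.differentiableOn
  have hzz : (z.re : ℂ) + z.im * Complex.I = z := Complex.re_add_im z
  -- horizontal second derivative
  have hev1 : deriv (fun x : ℝ => (f ((x : ℂ) + z.im * Complex.I)).im)
      =ᶠ[𝓝 z.re] fun x : ℝ => (deriv f ((x : ℂ) + z.im * Complex.I)).im := by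
    have hopen : IsOpen ((fun x : ℝ => (x : ℂ) + z.im * Complex.I) ⁻¹' U) :=
      (Complex.continuous_ofReal.add continuous_const).isOpen_preimage U hU
    have hmem : z.re ∈ (fun x : ℝ => (x : ℂ) + z.im * Complex.I) ⁻¹' U := by
      simp only [mem_preimage, hzz]; exact hz
    filter_upwards [hopen.mem_nhds hmem] with x hx
    exact (slice_h_hasDerivAt_im hU hf hx).deriv
  have h1 : deriv (deriv (fun x : ℝ => (f ((x : ℂ) + z.im * Complex.I)).im)) z.re
      = (deriv (deriv f) z).im := by
    rw [hev1.deriv_eq]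
    have := (slice_h_hasDerivAt_im hU hf' (x := z.re) (b := z.im) (by rw [hzz]; exact hz)).deriv
    rw [this, hzz]
  -- vertical second derivative
  have hev2 : deriv (fun y : ℝ => (f ((z.re : ℂ) + y * Complex.I)).im)
      =ᶠ[𝓝 z.im] fun y : ℝ => ((fun w => deriv f w * Complex.I) ((z.re : ℂ) + y * Complex.I)).im := by
    have hopen : IsOpen ((fun y : ℝ => (z.re : ℂ) + y * Complex.I) ⁻¹' U) :=
      (continuous_const.add (Complex.continuous_ofReal.mul continuous_const)).isOpen_preimage U hU
    have hmem : z.im ∈ (fun y : ℝ => (z.re : ℂ) + y * Complex.I) ⁻¹' U := by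
      simp only [mem_preimage, hzz]; exact hz
    filter_upwards [hopen.mem_nhds hmem] with y hy
    exact (slice_v_hasDerivAt_im hU hf hy).deriv
  have hg : DifferentiableOn ℂ (fun w => deriv f w * Complex.I) U := hf'.mul_const _
  have h2 : deriv (deriv (fun y : ℝ => (f ((z.re : ℂ) + y * Complex.I)).im)) z.im
      = ((deriv (deriv f) z * Complex.I) * Complex.I).im := by
    rw [hev2.deriv_eq]
    have := (slice_v_hasDerivAt_im hU hg (a := z.re) (y := z.im) (by rw [hzz]; exact hz)).deriv
    rw [this, hzz]
    have : deriv (fun w => deriv f w * Complex.I) z = deriv (deriv f) z * Complex.I := by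
      apply deriv_mul_const
      exact hf'.differentiableAt (hU.mem_nhds hz)
    rw [this]
  unfold planeLaplacian
  rw [h1, h2]
  have : deriv (deriv f) z * Complex.I * Complex.I = -(deriv (deriv f) z) := by
    rw [mul_assoc, Complex.I_mul_I, mul_neg_one]
  rw [this]
  simp

lemma ne_zero_of_im_pos {w : ℂ} (h : 0 < w.im) : w ≠ 0 := fun hw => by simp [hw] at h

lemma mob1_denom_ne {r : ℝ} {z : ℂ} (hz : 0 < z.im) : z + (r : ℂ) ≠ 0 := by
  intro h
  have := congrArg Complex.im h
  simp at this; linarith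

lemma mob2_denom_ne {R : ℝ} {z : ℂ} (hz : 0 < z.im) : (R : ℂ) - z ≠ 0 := by
  intro h
  have := congrArg Complex.im h
  simp at this; linarith

lemma im_mob1_pos {r : ℝ} (hr : 0 < r) {z : ℂ} (hz : 0 < z.im) :
    0 < ((z - (r : ℂ)) / (z + (r : ℂ))).im := by
  have hN : 0 < Complex.normSq (z + r) := Complex.normSq_pos.2 (mob1_denom_ne hz)
  rw [Complex.div_im]
  simp only [Complex.add_im, Complex.add_re, Complex.sub_re, Complex.sub_im,
    Complex.ofReal_re, Complex.ofReal_im, sub_zero, add_zero]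
  rw [div_sub_div_same]
  apply div_pos _ hN
  nlinarith

lemma im_mob2_pos {R : ℝ} (hR : 0 < R) {z : ℂ} (hz : 0 < z.im) :
    0 < (((R : ℂ) + z) / ((R : ℂ) - z)).im := by
  have hN : 0 < Complex.normSq ((R : ℂ) - z) := Complex.normSq_pos.2 (mob2_denom_ne hz)
  rw [Complex.div_im]
  simp only [Complex.add_im, Complex.add_re, Complex.sub_re, Complex.sub_im,
    Complex.ofReal_re, Complex.ofReal_im, zero_add, zero_sub]
  rw [div_sub_div_same]
  apply div_pos _ hN
  nlinarith

lemma re_mob1_zero {r : ℝ} {z : ℂ} (hz : 0 < z.im) (habs : ‖z‖ = r) :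
    ((z - (r : ℂ)) / (z + (r : ℂ))).re = 0 := by
  have hN : 0 < Complex.normSq (z + r) := Complex.normSq_pos.2 (mob1_denom_ne hz)
  rw [Complex.div_re]
  simp only [Complex.add_im, Complex.add_re, Complex.sub_re, Complex.sub_im,
    Complex.ofReal_re, Complex.ofReal_im, sub_zero, add_zero]
  rw [← add_div]
  have hsq : z.re ^ 2 + z.im ^ 2 = r ^ 2 := by
    have := Complex.sq_norm z
    rw [habs] at this
    rw [this, Complex.normSq_apply]; ring
  have : (z.re - r) * (z.re + r) + z.im * z.im = 0 := by nlinarith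
  rw [this, zero_div]

lemma re_mob2_zero {R : ℝ} {z : ℂ} (hz : 0 < z.im) (habs : ‖z‖ = R) :
    (((R : ℂ) + z) / ((R : ℂ) - z)).re = 0 := by
  have hN : 0 < Complex.normSq ((R : ℂ) - z) := Complex.normSq_pos.2 (mob2_denom_ne hz)
  rw [Complex.div_re]
  simp only [Complex.add_im, Complex.add_re, Complex.sub_re, Complex.sub_im,
    Complex.ofReal_re, Complex.ofReal_im, zero_add, zero_sub]
  rw [← add_div]
  have hsq : z.re ^ 2 + z.im ^ 2 = R ^ 2 := by
    have := Complex.sq_norm z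
    rw [habs] at this
    rw [this, Complex.normSq_apply]; ring
  have : (R + z.re) * (R - z.re) + z.im * -z.im = 0 := by nlinarith
  rw [this, zero_div]

lemma diff_log_mob1 {r : ℝ} (hr : 0 < r) {z : ℂ} (hz : 0 < z.im) :
    DifferentiableAt ℂ (fun w => Complex.log ((w - (r : ℂ)) / (w + (r : ℂ)))) z := by
  have hslit : (z - (r : ℂ)) / (z + (r : ℂ)) ∈ Complex.slitPlane :=
    Complex.mem_slitPlane_iff.2 (Or.inr (ne_of_gt (im_mob1_pos hr hz)))
  exact (Complex.differentiableAt_log hslit).comp z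
    (((by fun_prop : DifferentiableAt ℂ (fun w : ℂ => w - (r:ℂ)) z).div
      (by fun_prop : DifferentiableAt ℂ (fun w : ℂ => w + (r:ℂ)) z)
      (mob1_denom_ne hz)))

lemma diff_log_mob2 {R : ℝ} (hR : 0 < R) {z : ℂ} (hz : 0 < z.im) :
    DifferentiableAt ℂ (fun w => Complex.log (((R : ℂ) + w) / ((R : ℂ) - w))) z := by
  have hslit : ((R : ℂ) + z) / ((R : ℂ) - z) ∈ Complex.slitPlane :=
    Complex.mem_slitPlane_iff.2 (Or.inr (ne_of_gt (im_mob2_pos hR hz)))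
  exact (Complex.differentiableAt_log hslit).comp z
    ((differentiableAt_const _).add differentiableAt_id |>.div
      ((differentiableAt_const _).sub differentiableAt_id)
      (mob2_denom_ne hz))

lemma upper_bound_aux (F : ℂ → ℝ)
    (hC2 : ContDiffOn ℝ 2 F {z : ℂ | 0 < z.im})
    (hharm : ∀ z ∈ {z : ℂ | 0 < z.im}, planeLaplacian F z = 0)
    (C : ℝ) (hC0 : 0 ≤ C) (hbddF : ∀ z ∈ {z : ℂ | 0 < z.im}, F z ≤ C)
    (hbdry : ∀ x : ℝ, x ≠ 0 →
      Tendsto F (nhdsWithin (x : ℂ) {z : ℂ | 0 < z.im}) (nhds 0))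
    {z₀ : ℂ} (hz₀ : 0 < z₀.im) : F z₀ ≤ 0 := by
  suffices h3 : ∀ ε > (0:ℝ), F z₀ ≤ 3 * ε by
    by_contra hpos
    push_neg at hpos
    have := h3 (F z₀ / 4) (by linarith)
    linarith
  intro ε hε
  have hHopen : IsOpen {z : ℂ | 0 < z.im} := isOpen_lt continuous_const Complex.continuous_im
  set c := 2 * C / Real.pi with hcdef
  have hc0 : 0 ≤ c := by positivity
  have hcπ : c * (Real.pi / 2) = C := by
    rw [hcdef]; field_simp
  clear_value c
  have habs0 : 0 < ‖z₀‖ := norm_pos_iff.mpr (ne_zero_of_im_pos hz₀)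
  have hslit1 : (1 : ℂ) ∈ Complex.slitPlane :=
    Complex.mem_slitPlane_iff.2 (Or.inl (by norm_num))
  -- choose r
  have hrT : Tendsto (fun r : ℝ => c * (Complex.log ((z₀ - (r:ℂ)) / (z₀ + (r:ℂ)))).im)
      (𝓝[>] (0:ℝ)) (𝓝 0) := by
    have hnum : Tendsto (fun r : ℝ => z₀ - (r:ℂ)) (𝓝 0) (𝓝 z₀) := by
      have hco : Continuous (fun r : ℝ => z₀ - (r:ℂ)) :=
        continuous_const.sub Complex.continuous_ofReal
      simpa using hco.tendsto (0:ℝ)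
    have hden : Tendsto (fun r : ℝ => z₀ + (r:ℂ)) (𝓝 0) (𝓝 z₀) := by
      have hco : Continuous (fun r : ℝ => z₀ + (r:ℂ)) :=
        continuous_const.add Complex.continuous_ofReal
      simpa using hco.tendsto (0:ℝ)
    have h1 : Tendsto (fun r : ℝ => (z₀ - (r:ℂ)) / (z₀ + (r:ℂ))) (𝓝 0) (𝓝 1) := by
      have := hnum.div hden (ne_zero_of_im_pos hz₀)
      simpa [div_self (ne_zero_of_im_pos hz₀), Pi.div_def] using this
    have h2 : Tendsto (fun r : ℝ => Complex.log ((z₀ - (r:ℂ)) / (z₀ + (r:ℂ)))) (𝓝 0)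
        (𝓝 0) := by
      have := (continuousAt_clog hslit1).tendsto.comp h1
      simpa [Complex.log_one, Function.comp_def] using this
    have h3 : Tendsto (fun r : ℝ => c * (Complex.log ((z₀ - (r:ℂ)) / (z₀ + (r:ℂ)))).im)
        (𝓝 0) (𝓝 0) := by
      have := (Complex.continuous_im.continuousAt.tendsto.comp h2).const_mul c
      simpa using this
    exact h3.mono_left nhdsWithin_le_nhds
  obtain ⟨r, hr1, hr2, hr0⟩ : ∃ r : ℝ, c * (Complex.log ((z₀ - (r:ℂ)) / (z₀ + (r:ℂ)))).im < ε
      ∧ r < ‖z₀‖ ∧ 0 < r := by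
    have e1 := hrT.eventually (eventually_lt_nhds hε)
    have e2 : ∀ᶠ r in 𝓝[>] (0:ℝ), r < ‖z₀‖ :=
      eventually_nhdsWithin_of_eventually_nhds (eventually_lt_nhds habs0)
    have e3 : ∀ᶠ r in 𝓝[>] (0:ℝ), 0 < r := eventually_mem_nhdsWithin
    exact ((e1.and (e2.and e3)).exists).imp (fun r hr => ⟨hr.1, hr.2.1, hr.2.2⟩)
  -- choose R
  have hRT : Tendsto (fun R : ℝ => c * (Complex.log (((R:ℂ) + z₀) / ((R:ℂ) - z₀))).im)
      atTop (𝓝 0) := by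
    have hu : Tendsto (fun R : ℝ => z₀ / (R:ℂ)) atTop (𝓝 0) := by
      have h0 : Tendsto (fun R : ℝ => ((R⁻¹ : ℝ) : ℂ)) atTop (𝓝 0) := by
        have := (Complex.continuous_ofReal.tendsto (0:ℝ)).comp tendsto_inv_atTop_zero
        simpa [Function.comp_def] using this
      have := h0.const_mul z₀
      rw [mul_zero] at this
      apply this.congr
      intro R
      rw [Complex.ofReal_inv, div_eq_mul_inv, mul_comm]
    have h2 : Tendsto (fun R : ℝ => ((1:ℂ) + z₀ / R) / ((1:ℂ) - z₀ / R)) atTop (𝓝 1) := by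
      have hA : Tendsto (fun R : ℝ => (1:ℂ) + z₀ / R) atTop (𝓝 (1 + 0)) :=
        tendsto_const_nhds.add hu
      have hBt : Tendsto (fun R : ℝ => (1:ℂ) - z₀ / R) atTop (𝓝 (1 - 0)) :=
        tendsto_const_nhds.sub hu
      have := hA.div hBt (by norm_num : (1:ℂ) - 0 ≠ 0)
      simpa [Pi.div_def] using this
    have h1 : Tendsto (fun R : ℝ => ((R:ℂ) + z₀) / ((R:ℂ) - z₀)) atTop (𝓝 1) := by
      apply h2.congr'
      filter_upwards [eventually_gt_atTop (0:ℝ), eventually_gt_atTop (‖z₀‖)]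
        with R hR0 hRa
      have hR0' : ((R:ℝ):ℂ) ≠ 0 := by
        simpa using (ne_of_gt hR0)
      have hRz : ((R:ℝ):ℂ) - z₀ ≠ 0 := by
        intro hhh
        have : z₀ = ((R:ℝ):ℂ) := by linear_combination -hhh
        rw [this] at hRa
        simp [Complex.norm_real, abs_of_pos hR0] at hRa
      field_simp
    have h2' : Tendsto (fun R : ℝ => Complex.log (((R:ℂ) + z₀) / ((R:ℂ) - z₀))) atTop
        (𝓝 0) := by
      have := (continuousAt_clog hslit1).tendsto.comp h1
      simpa [Complex.log_one, Function.comp_def] using this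
    have := (Complex.continuous_im.continuousAt.tendsto.comp h2').const_mul c
    simpa using this
  obtain ⟨R, hR1, hRa⟩ : ∃ R : ℝ, c * (Complex.log (((R:ℂ) + z₀) / ((R:ℂ) - z₀))).im < ε
      ∧ ‖z₀‖ < R := by
    have e1 := hRT.eventually (eventually_lt_nhds hε)
    have e2 : ∀ᶠ R in atTop, ‖z₀‖ < R := eventually_gt_atTop _
    exact ((e1.and e2).exists)
  have hR0 : 0 < R := lt_trans habs0 hRa
  -- the barrier
  set G : ℂ → ℂ := fun z => -(ε:ℂ) * Complex.I -
    (c:ℂ) * (Complex.log ((z - (r:ℂ)) / (z + (r:ℂ))) +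
      Complex.log (((R:ℂ) + z) / ((R:ℂ) - z))) with hG
  have hGdiff : DifferentiableOn ℂ G {z : ℂ | 0 < z.im} := by
    intro z hz
    exact (((differentiableAt_const _).sub ((differentiableAt_const _).mul
      ((diff_log_mob1 hr0 hz).add (diff_log_mob2 hR0 hz)))).differentiableWithinAt)
  have hGim : ∀ z : ℂ, (G z).im = -ε - c * ((Complex.log ((z - (r:ℂ)) / (z + (r:ℂ)))).im +
      (Complex.log (((R:ℂ) + z) / ((R:ℂ) - z))).im) := by
    intro z
    rw [hG]
    simp [Complex.sub_im, Complex.add_im, Complex.mul_im, Complex.ofReal_re,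
      Complex.ofReal_im, Complex.I_im, Complex.I_re, Complex.neg_im, Complex.neg_re]
  set hB : ℂ → ℝ := fun z => F z + (G z).im with hhB
  set Ω : Set ℂ := {z : ℂ | r < ‖z‖ ∧ ‖z‖ < R ∧ 0 < z.im} with hΩdef
  have hΩopen : IsOpen Ω := by
    rw [hΩdef]
    exact (isOpen_lt continuous_const continuous_norm).inter
      ((isOpen_lt continuous_norm continuous_const).inter
        (isOpen_lt continuous_const Complex.continuous_im))
  have hΩsubH : Ω ⊆ {z : ℂ | 0 < z.im} := fun z hz => hz.2.2
  have hΩbd : Bornology.IsBounded Ω := by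
    apply (Metric.isBounded_ball (x := (0:ℂ)) (r := R + 1)).subset
    intro z hz
    simp only [Metric.mem_ball, Complex.dist_eq, sub_zero]
    have := hz.2.1
    linarith
  have hclos : closure Ω ⊆
      {z : ℂ | r ≤ ‖z‖ ∧ ‖z‖ ≤ R ∧ 0 ≤ z.im} := by
    apply closure_minimal
    · exact fun z hz => ⟨hz.1.le, hz.2.1.le, hz.2.2.le⟩
    · exact (isClosed_le continuous_const continuous_norm).inter
        ((isClosed_le continuous_norm continuous_const).inter
          (isClosed_le continuous_const Complex.continuous_im))
  have hGimC2 : ContDiffOn ℝ 2 (fun z => (G z).im) {z : ℂ | 0 < z.im} :=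
    contDiffOn_im_of_holo hHopen hGdiff
  have hhC2 : ContDiffOn ℝ 2 hB Ω := (hC2.mono hΩsubH).add (hGimC2.mono hΩsubH)
  have hsub : ∀ z ∈ Ω, 0 ≤ planeLaplacian hB z := by
    intro z hz
    have hadd := planeLaplacian_add hHopen hC2 hGimC2 (hΩsubH hz)
    rw [hhB]
    rw [hadd, hharm z (hΩsubH hz), planeLaplacian_im_holo hHopen hGdiff (hΩsubH hz)]
    norm_num
  -- boundary estimate for the barrier everywhere in H
  have hHle : ∀ z ∈ {z : ℂ | 0 < z.im}, hB z ≤ F z - ε := by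
    intro z hz
    have a1 : 0 ≤ (Complex.log ((z - (r:ℂ)) / (z + (r:ℂ)))).im := by
      rw [Complex.log_im]
      exact Complex.arg_nonneg_iff.2 (im_mob1_pos hr0 hz).le
    have a2 : 0 ≤ (Complex.log (((R:ℂ) + z) / ((R:ℂ) - z))).im := by
      rw [Complex.log_im]
      exact Complex.arg_nonneg_iff.2 (im_mob2_pos hR0 hz).le
    have := mul_nonneg hc0 (add_nonneg a1 a2)
    rw [hhB]
    simp only []
    rw [hGim z]
    linarith
  have hbdryMP : ∀ ζ ∈ closure Ω \ Ω, ∀ ε' > (0:ℝ), ∀ᶠ z in 𝓝[Ω] ζ, hB z < ε' := by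
    intro ζ hζ ε' hε'
    obtain ⟨hζ1, hζ2, hζ3⟩ := hclos hζ.1
    rcases eq_or_lt_of_le hζ3 with him0 | himpos
    · -- real boundary point
      have hζre : ζ = ((ζ.re : ℝ) : ℂ) := by
        apply Complex.ext
        · simp
        · simp [← him0]
      have hne : ζ.re ≠ 0 := by
        intro h0
        have hz0 : ζ = 0 := by rw [hζre, h0]; simp
        rw [hz0] at hζ1
        simp at hζ1
        linarith
      have hten := hbdry ζ.re hne
      rw [← hζre] at hten
      have hev : ∀ᶠ z in 𝓝[{z : ℂ | 0 < z.im}] ζ, F z < ε :=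
        hten.eventually (eventually_lt_nhds hε)
      have hmono : 𝓝[Ω] ζ ≤ 𝓝[{z : ℂ | 0 < z.im}] ζ := nhdsWithin_mono ζ hΩsubH
      filter_upwards [hev.filter_mono hmono, eventually_mem_nhdsWithin] with z hzF hzΩ
      have := hHle z (hΩsubH hzΩ)
      linarith
    · -- semicircle boundary point
      have hζH : ζ ∈ {z : ℂ | 0 < z.im} := himpos
      have hcase : ‖ζ‖ = r ∨ ‖ζ‖ = R := by
        by_contra hcc
        push_neg at hcc
        exact hζ.2 ⟨lt_of_le_of_ne hζ1 (Ne.symm hcc.1), lt_of_le_of_ne hζ2 hcc.2, himpos⟩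
      have a1 : 0 ≤ (Complex.log ((ζ - (r:ℂ)) / (ζ + (r:ℂ)))).im := by
        rw [Complex.log_im]
        exact Complex.arg_nonneg_iff.2 (im_mob1_pos hr0 himpos).le
      have a2 : 0 ≤ (Complex.log (((R:ℂ) + ζ) / ((R:ℂ) - ζ))).im := by
        rw [Complex.log_im]
        exact Complex.arg_nonneg_iff.2 (im_mob2_pos hR0 himpos).le
      have hFb := hbddF ζ hζH
      have hkey : hB ζ ≤ -ε := by
        rcases hcase with hcr | hcR
        · have hhalf : (Complex.log ((ζ - (r:ℂ)) / (ζ + (r:ℂ)))).im = Real.pi / 2 := by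
            rw [Complex.log_im]
            exact Complex.arg_eq_pi_div_two_iff.2
              ⟨re_mob1_zero himpos hcr, im_mob1_pos hr0 himpos⟩
          rw [hhB]
          simp only []
          rw [hGim ζ, hhalf]
          nlinarith [mul_nonneg hc0 a2]
        · have hhalf : (Complex.log (((R:ℂ) + ζ) / ((R:ℂ) - ζ))).im = Real.pi / 2 := by
            rw [Complex.log_im]
            exact Complex.arg_eq_pi_div_two_iff.2
              ⟨re_mob2_zero himpos hcR, im_mob2_pos hR0 himpos⟩
          rw [hhB]
          simp only []
          rw [hGim ζ, hhalf]
          nlinarith [mul_nonneg hc0 a1]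
      have hFc : ContinuousAt F ζ := (hC2.continuousOn ζ hζH).continuousAt
        (hHopen.mem_nhds hζH)
      have hGc : ContinuousAt (fun z => (G z).im) ζ :=
        Complex.continuous_im.continuousAt.comp
          ((hGdiff.differentiableAt (hHopen.mem_nhds hζH)).continuousAt)
      have hhc : ContinuousAt hB ζ := hFc.add hGc
      have hev : ∀ᶠ z in 𝓝 ζ, hB z < ε' :=
        hhc.eventually (eventually_lt_nhds (by linarith : hB ζ < ε'))
      exact eventually_nhdsWithin_of_eventually_nhds hev
  have hML := maximum_principle hΩopen hΩbd hhC2 hsub hbdryMP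
  have hz₀Ω : z₀ ∈ Ω := ⟨hr2, hRa, hz₀⟩
  have hfinal := hML z₀ hz₀Ω
  rw [hhB] at hfinal
  simp only [] at hfinal
  rw [hGim z₀] at hfinal
  set a₁ := (Complex.log ((z₀ - (r:ℂ)) / (z₀ + (r:ℂ)))).im
  set a₂ := (Complex.log (((R:ℂ) + z₀) / ((R:ℂ) - z₀))).im
  have hmul : c * (a₁ + a₂) = c * a₁ + c * a₂ := mul_add c a₁ a₂
  linarith

lemma planeLaplacian_neg (f : ℂ → ℝ) (z : ℂ) :
    planeLaplacian (fun w => -(f w)) z = -planeLaplacian f z := by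
  unfold planeLaplacian
  have key : ∀ g : ℝ → ℝ, ∀ t : ℝ,
      deriv (deriv (fun x => -(g x))) t = -(deriv (deriv g) t) := by
    intro g t
    have h1 : (deriv fun x => -(g x)) = fun x => -(deriv g x) := funext fun x => deriv.neg
    rw [h1]
    exact deriv.neg
  rw [key, key]
  ring

/-- The uniqueness step in the proof of Lemma 4.6: a bounded harmonic function on the
upper half-plane whose boundary values vanish on `ℝ \ {0}` is identically zero. -/
theorem bounded_harmonic_vanishing_boundary_eq_zero (F : ℂ → ℝ)
    (hC2 : ContDiffOn ℝ 2 F {z : ℂ | 0 < z.im})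
    (hharm : ∀ z ∈ {z : ℂ | 0 < z.im}, planeLaplacian F z = 0)
    (hbdd : ∃ C : ℝ, ∀ z ∈ {z : ℂ | 0 < z.im}, |F z| ≤ C)
    (hbdry : ∀ x : ℝ, x ≠ 0 →
      Tendsto F (nhdsWithin (x : ℂ) {z : ℂ | 0 < z.im}) (nhds 0)) :
    ∀ z ∈ {z : ℂ | 0 < z.im}, F z = 0 := by
  obtain ⟨C₀, hC₀⟩ := hbdd
  set C := max C₀ 0 with hC
  have hC0 : 0 ≤ C := le_max_right _ _
  have hup : ∀ z ∈ {z : ℂ | 0 < z.im}, F z ≤ C := fun z hz =>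
    le_trans (le_abs_self _) (le_trans (hC₀ z hz) (le_max_left _ _))
  have hlo : ∀ z ∈ {z : ℂ | 0 < z.im}, -(F z) ≤ C := fun z hz =>
    le_trans (neg_le_abs _) (le_trans (hC₀ z hz) (le_max_left _ _))
  intro z hz
  have h1 : F z ≤ 0 := upper_bound_aux F hC2 hharm C hC0 hup hbdry hz
  have h2 : -(F z) ≤ 0 := by
    apply upper_bound_aux (fun w => -(F w)) hC2.neg _ C hC0 hlo _ hz
    · intro w hw
      rw [planeLaplacian_neg, hharm w hw, neg_zero]
    · intro x hx
      have := (hbdry x hx).neg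
      simpa using this
  linarith
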